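/- Let F be a field and t ∈ F. Suppose f assigns to every composition λ ∈ ℕⁿ a polynomial f_λ ∈ F[x_1,…,x_n] such that for every 1 ≤ i ≤ n−1: (i) if λ_i = λ_{i+1} then σ_i f_λ = f_λ (f_λ is symmetric in x_i and x_{i+1}); (ii) if λ_i > λ_{i+1} then (x_i − x_{i+1})·f_{s_iλ} = t·(x_i − x_{i+1})·f_λ − (t·x_i − x_{i+1})·(f_λ − σ_i f_λ), where s_iλ denotes λ with entries i and i+1 interchanged and σ_i is the algebra automorphism of F[x_1,…,x_n] exchanging x_i and x_{i+1}. Then for every composition λ, the polynomial 𝒫_λ = Σ_μ f_μ, where the sum runs over the set of all distinct rearrangements μ of λ, is a symmetric polynomial (invariant under every permutation of the variables x_1,…,x_n). -/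

import Mathlib

/-!
STATEMENT 11 (Lemma 7.1): if the family of polynomials `f_λ` satisfies the qKZ exchange
relations, then for any composition `λ` the sum of `f_μ` over all distinct rearrangements
`μ` of `λ` is a symmetric polynomial.
-/

open scoped BigOperators
open MvPolynomial

/-- The set of adjacent transpositions generates `Perm (Fin n)`. -/
lemma adj_swaps_closure (n : ℕ) :
    Submonoid.closure {σ : Equiv.Perm (Fin n) | ∃ (i : ℕ) (hi : i + 1 < n),
      σ = Equiv.swap ⟨i, Nat.lt_of_succ_lt hi⟩ ⟨i + 1, hi⟩} = ⊤ := by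
  cases n with
  | zero =>
    apply top_unique
    intro x _
    have hx : x = 1 := Subsingleton.elim _ _
    rw [hx]; exact one_mem _
  | succ m =>
    apply top_unique
    rw [← Equiv.Perm.mclosure_swap_castSucc_succ m]
    apply Submonoid.closure_mono
    rintro _ ⟨i, rfl⟩
    refine ⟨i.val, by omega, ?_⟩
    rfl

theorem sum_over_rearrangements_is_symmetric
    {F : Type*} [Field F] (n : ℕ) (t : F)
    (f : (Fin n → ℕ) → MvPolynomial (Fin n) F)
    (h1 : ∀ (lam : Fin n → ℕ) (i : ℕ) (hi : i + 1 < n),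
      lam ⟨i, Nat.lt_of_succ_lt hi⟩ = lam ⟨i + 1, hi⟩ →
      rename (Equiv.swap ⟨i, Nat.lt_of_succ_lt hi⟩ ⟨i + 1, hi⟩) (f lam) = f lam)
    (h2 : ∀ (lam : Fin n → ℕ) (i : ℕ) (hi : i + 1 < n),
      lam ⟨i + 1, hi⟩ < lam ⟨i, Nat.lt_of_succ_lt hi⟩ →
      (X ⟨i, Nat.lt_of_succ_lt hi⟩ - X ⟨i + 1, hi⟩)
          * f (lam ∘ Equiv.swap ⟨i, Nat.lt_of_succ_lt hi⟩ ⟨i + 1, hi⟩)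
      = C t * (X ⟨i, Nat.lt_of_succ_lt hi⟩ - X ⟨i + 1, hi⟩) * f lam
        - (C t * X ⟨i, Nat.lt_of_succ_lt hi⟩ - X ⟨i + 1, hi⟩)
          * (f lam - rename (Equiv.swap ⟨i, Nat.lt_of_succ_lt hi⟩ ⟨i + 1, hi⟩) (f lam))) :
    ∀ (lam : Fin n → ℕ) (π : Equiv.Perm (Fin n)),
      rename π
        (∑ mu ∈ Finset.image (fun σ : Equiv.Perm (Fin n) => lam ∘ σ) Finset.univ, f mu)
      = ∑ mu ∈ Finset.image (fun σ : Equiv.Perm (Fin n) => lam ∘ σ) Finset.univ, f mu := by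
  intro lam π
  -- abbreviations
  set S : Finset (Fin n → ℕ) :=
    Finset.image (fun σ : Equiv.Perm (Fin n) => lam ∘ σ) Finset.univ with hS
  -- Key pairing fact: for each composition μ and adjacent index i,
  -- (σᵢ f μ - f μ) + (σᵢ f (μ∘sᵢ) - f (μ∘sᵢ)) = 0.
  have pair : ∀ (mu : Fin n → ℕ) (i : ℕ) (hi : i + 1 < n),
      (rename (Equiv.swap ⟨i, Nat.lt_of_succ_lt hi⟩ ⟨i + 1, hi⟩) (f mu) - f mu)
        + (rename (Equiv.swap ⟨i, Nat.lt_of_succ_lt hi⟩ ⟨i + 1, hi⟩)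
              (f (mu ∘ Equiv.swap ⟨i, Nat.lt_of_succ_lt hi⟩ ⟨i + 1, hi⟩))
            - f (mu ∘ Equiv.swap ⟨i, Nat.lt_of_succ_lt hi⟩ ⟨i + 1, hi⟩)) = 0 := by
    -- general double-swap and helper facts
    intro mu i hi
    set a : Fin n := ⟨i, Nat.lt_of_succ_lt hi⟩
    set b : Fin n := ⟨i + 1, hi⟩
    have hab : a ≠ b := by simp [a, b, Fin.ext_iff]
    set s : Equiv.Perm (Fin n) := Equiv.swap a b with hs
    have hss : ∀ p : MvPolynomial (Fin n) F, rename (⇑s) (rename (⇑s) p) = p := by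
      intro p
      rw [rename_rename]
      have : (⇑s ∘ ⇑s) = id := funext fun x => Equiv.swap_apply_self a b x
      rw [this, rename_id, AlgHom.id_apply]
    have hcomp : ∀ (ν : Fin n → ℕ), (ν ∘ ⇑s) ∘ ⇑s = ν := by
      intro ν
      funext x
      exact congrArg ν (Equiv.swap_apply_self a b x)
    have hXne : (X a - X b : MvPolynomial (Fin n) F) ≠ 0 := by
      intro h
      apply hab
      exact MvPolynomial.X_injective (sub_eq_zero.mp h)
    -- the main case: strict inequality μ_a > μ_b
    have main : ∀ (ν : Fin n → ℕ), ν b < ν a →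
        (rename (⇑s) (f ν) - f ν) + (rename (⇑s) (f (ν ∘ ⇑s)) - f (ν ∘ ⇑s)) = 0 := by
      intro ν hlt
      have E1 : (X a - X b) * f (ν ∘ ⇑s) = C t * (X a - X b) * f ν
          - (C t * X a - X b) * (f ν - rename (⇑s) (f ν)) := h2 ν i hi hlt
      have E2 := congrArg (rename (⇑s) :
        MvPolynomial (Fin n) F → MvPolynomial (Fin n) F) E1
      simp only [map_mul, map_sub, rename_C, rename_X, hss] at E2
      rw [show s a = b from Equiv.swap_apply_left a b,
        show s b = a from Equiv.swap_apply_right a b] at E2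
      apply mul_left_cancel₀ hXne
      rw [mul_zero]
      linear_combination -E1 - E2
    rcases lt_trichotomy (mu a) (mu b) with hlt | heq | hgt
    · have h' : (mu ∘ ⇑s) b < (mu ∘ ⇑s) a := by
        simpa [hs, Function.comp, Equiv.swap_apply_left, Equiv.swap_apply_right] using hlt
      have := main (mu ∘ ⇑s) h'
      rw [hcomp mu] at this
      linear_combination this
    · have hfix : mu ∘ ⇑s = mu := by
        funext x
        rcases eq_or_ne x a with rfl | hxa
        · simp [hs, Function.comp, Equiv.swap_apply_left, heq]
        rcases eq_or_ne x b with rfl | hxb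
        · simp [hs, Function.comp, Equiv.swap_apply_right, heq]
        · simp [hs, Function.comp, Equiv.swap_apply_of_ne_of_ne hxa hxb]
      rw [hfix, h1 mu i hi heq]
      ring
    · exact main mu hgt
  -- invariance of the orbit sum under one adjacent transposition
  have swap_inv : ∀ (i : ℕ) (hi : i + 1 < n),
      rename (Equiv.swap ⟨i, Nat.lt_of_succ_lt hi⟩ ⟨i + 1, hi⟩) (∑ mu ∈ S, f mu)
        = ∑ mu ∈ S, f mu := by
    intro i hi
    set a : Fin n := ⟨i, Nat.lt_of_succ_lt hi⟩
    set b : Fin n := ⟨i + 1, hi⟩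
    set s : Equiv.Perm (Fin n) := Equiv.swap a b with hs
    rw [map_sum, ← sub_eq_zero, ← Finset.sum_sub_distrib]
    refine Finset.sum_involution (fun mu _ => mu ∘ ⇑s) ?_ ?_ ?_ ?_
    · intro mu _
      exact pair mu i hi
    · intro mu _ hne heq
      apply hne
      have hab : (mu ∘ ⇑s) a = mu b := by simp [hs, Function.comp, Equiv.swap_apply_left]
      have heq' : mu a = mu b := by
        conv_lhs => rw [← heq]
        exact hab
      rw [h1 mu i hi heq', sub_self]
    · intro mu hmu
      show mu ∘ ⇑s ∈ S
      rw [hS, Finset.mem_image] at hmu ⊢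
      obtain ⟨τ, _, rfl⟩ := hmu
      exact ⟨s.trans τ, Finset.mem_univ _, rfl⟩
    · intro mu _
      funext x
      exact congrArg mu (Equiv.swap_apply_self a b x)
  -- now induct over the generation of π by adjacent transpositions
  have hπ : π ∈ Submonoid.closure {σ : Equiv.Perm (Fin n) | ∃ (i : ℕ) (hi : i + 1 < n),
      σ = Equiv.swap ⟨i, Nat.lt_of_succ_lt hi⟩ ⟨i + 1, hi⟩} := by
    rw [adj_swaps_closure n]; trivial
  induction hπ using Submonoid.closure_induction with
  | mem σ hσ =>
    obtain ⟨i, hi, rfl⟩ := hσ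
    exact swap_inv i hi
  | one =>
    rw [show ⇑(1 : Equiv.Perm (Fin n)) = id from rfl, rename_id, AlgHom.id_apply]
  | mul x y hx hy ihx ihy =>
    rw [show ⇑(x * y) = ⇑x ∘ ⇑y from rfl, ← rename_rename, ihy, ihx]
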